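/- Let W̃, R̃₀ ∈ ℂ^{n×n} be Hermitian positive semidefinite with h^H W̃ h > 0 for a vector h ∈ ℂ^n. Define w = (h^H W̃ h)^{-1/2}·W̃ h and R₀ = R̃₀ + W̃ − w·w^H. Then |w^H h|² = h^H W̃ h, the matrix W̃ − w·w^H is positive semidefinite (hence R₀ is positive semidefinite), and tr(w·w^H) + tr(R₀) = tr(W̃) + tr(R̃₀). -/

import Mathlib

open Matrix ComplexOrder

/-- Cauchy–Schwarz for the complex dot product. -/
lemma cs_aux {n : ℕ} (u v : Fin n → ℂ) :
    ‖star u ⬝ᵥ v‖ ^ 2 ≤ (star u ⬝ᵥ u).re * (star v ⬝ᵥ v).re := by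
  let u' : EuclideanSpace ℂ (Fin n) := WithLp.toLp 2 u
  let v' : EuclideanSpace ℂ (Fin n) := WithLp.toLp 2 v
  have hin : ∀ a b : Fin n → ℂ,
      (inner ℂ (WithLp.toLp 2 a) (WithLp.toLp 2 b) : ℂ) = star a ⬝ᵥ b := by
    intro a b
    simp [PiLp.inner_apply, dotProduct, RCLike.inner_apply, Pi.star_apply]
    exact Finset.sum_congr rfl fun _ _ => mul_comm _ _
  have h1 : ‖(inner ℂ u' v' : ℂ)‖ ≤ ‖u'‖ * ‖v'‖ := norm_inner_le_norm u' v'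
  have h2 : ‖u'‖ ^ 2 = (star u ⬝ᵥ u).re := by
    rw [← hin u u, ← @inner_self_eq_norm_sq ℂ, RCLike.re_to_complex]
  have h3 : ‖v'‖ ^ 2 = (star v ⬝ᵥ v).re := by
    rw [← hin v v, ← @inner_self_eq_norm_sq ℂ, RCLike.re_to_complex]
  calc ‖star u ⬝ᵥ v‖ ^ 2 = ‖(inner ℂ u' v' : ℂ)‖ ^ 2 := by simp only [u', v', hin]
    _ ≤ (‖u'‖ * ‖v'‖) ^ 2 := by
        apply pow_le_pow_left₀ (norm_nonneg _) h1
    _ = (star u ⬝ᵥ u).re * (star v ⬝ᵥ v).re := by rw [mul_pow, h2, h3]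

/-- SDR rank-one reconstruction: power toward `h` is preserved, residual is PSD,
    and total power is preserved. -/
theorem stmt3 (n : ℕ) (hn : 0 < n) (h : Fin n → ℂ) (Wt Rt : Matrix (Fin n) (Fin n) ℂ)
    (hWt : Wt.PosSemidef) (hRt : Rt.PosSemidef)
    (hpos : 0 < (star h ⬝ᵥ Wt.mulVec h).re)
    (w : Fin n → ℂ)
    (hw : w = ((Real.sqrt (star h ⬝ᵥ Wt.mulVec h).re)⁻¹ : ℂ) • Wt.mulVec h)
    (R₀ : Matrix (Fin n) (Fin n) ℂ)
    (hR₀ : R₀ = Rt + Wt - vecMulVec w (star w)) :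
    ‖star w ⬝ᵥ h‖ ^ 2 = (star h ⬝ᵥ Wt.mulVec h).re ∧
    (Wt - vecMulVec w (star w)).PosSemidef ∧
    R₀.PosSemidef ∧
    (vecMulVec w (star w)).trace + R₀.trace = Wt.trace + Rt.trace := by
  set s : ℂ := star h ⬝ᵥ Wt.mulVec h with hs
  have hsnn : 0 ≤ s := hWt.dotProduct_mulVec_nonneg h
  have hsre : s = (s.re : ℂ) := by
    obtain ⟨h1, h2⟩ := Complex.nonneg_iff.mp hsnn
    exact Complex.ext rfl h2.symm
  have hsqrt : Real.sqrt s.re > 0 := Real.sqrt_pos.mpr hpos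
  set c : ℝ := (Real.sqrt s.re)⁻¹ with hc
  have hcpos : 0 < c := inv_pos.mpr hsqrt
  have hc2 : c ^ 2 = (s.re)⁻¹ := by
    rw [hc, ← Real.sqrt_inv]
    exact Real.sq_sqrt (inv_nonneg.mpr hpos.le)
  -- quadratic form via B
  obtain ⟨B, hB⟩ : ∃ B : Matrix (Fin n) (Fin n) ℂ, Wt = Bᴴ * B := by
    open scoped MatrixOrder in
    exact CStarAlgebra.nonneg_iff_eq_star_mul_self.mp hWt.nonneg
  have key : ∀ x y : Fin n → ℂ,
      star x ⬝ᵥ Wt.mulVec y = star (B.mulVec x) ⬝ᵥ (B.mulVec y) := by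
    intro x y
    rw [hB, ← mulVec_mulVec, dotProduct_mulVec, ← star_mulVec]
  -- star w ⬝ᵥ x formula
  have hwx : ∀ x : Fin n → ℂ, star w ⬝ᵥ x = (c : ℂ) * (star (B.mulVec h) ⬝ᵥ (B.mulVec x)) := by
    intro x
    have hw' : w = (c : ℂ) • Wt.mulVec h := by
      rw [hw, hc, Complex.ofReal_inv]
    rw [hw']
    have h4 : star (((c : ℂ)) • Wt.mulVec h) = (c : ℂ) • star (Wt.mulVec h) := by
      simp [star_smul, Complex.star_def, Complex.conj_ofReal]
    rw [h4, smul_dotProduct, smul_eq_mul]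
    congr 1
    rw [hB, ← mulVec_mulVec, star_mulVec, conjTranspose_conjTranspose, ← dotProduct_mulVec]
  -- part 1
  have hP1 : ‖star w ⬝ᵥ h‖ ^ 2 = s.re := by
    have : star w ⬝ᵥ h = (c : ℂ) * s := by
      rw [hwx h, ← key h h]
    rw [this, norm_mul, mul_pow, Complex.norm_real, Real.norm_eq_abs,
      abs_of_pos hcpos, hc2]
    rw [hsre, Complex.norm_real, Real.norm_eq_abs, abs_of_pos hpos]
    rw [Complex.ofReal_re]
    field_simp
  -- part 2
  have hBh : (star (B.mulVec h) ⬝ᵥ (B.mulVec h)).re = s.re := by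
    rw [← key h h]
  have hP2 : (Wt - vecMulVec w (star w)).PosSemidef := by
    refine posSemidef_iff_dotProduct_mulVec.mpr ⟨?_, ?_⟩
    · -- Hermitian
      have h1 : (vecMulVec w (star w)).IsHermitian := by
        ext i j
        simp [vecMulVec_apply, conjTranspose_apply, mul_comm]
      exact hWt.1.sub h1
    · intro x
      have hMv : (vecMulVec w (star w)).mulVec x = (star w ⬝ᵥ x) • w := by
        ext i
        simp only [vecMulVec_apply, mulVec, dotProduct, Pi.smul_apply, smul_eq_mul,
          Finset.sum_mul, Pi.star_apply]
        exact Finset.sum_congr rfl fun k _ => by ring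
      have hq : star x ⬝ᵥ (vecMulVec w (star w)).mulVec x
          = ((‖star w ⬝ᵥ x‖ ^ 2 : ℝ) : ℂ) := by
        rw [hMv, dotProduct_smul, smul_eq_mul]
        have h5 : star x ⬝ᵥ w = star (star w ⬝ᵥ x) := star_dotProduct _ _
        rw [h5, Complex.star_def, Complex.mul_conj, Complex.normSq_eq_norm_sq]
      have hWq : star x ⬝ᵥ Wt.mulVec x = ((star x ⬝ᵥ Wt.mulVec x).re : ℂ) := by
        obtain ⟨h1, h2⟩ := Complex.nonneg_iff.mp (hWt.dotProduct_mulVec_nonneg x)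
        exact Complex.ext rfl h2.symm
      rw [sub_mulVec, dotProduct_sub, hq]
      rw [hWq]
      rw [← Complex.ofReal_sub, Complex.zero_le_real, sub_nonneg]
      -- Cauchy–Schwarz
      have h1 : ‖star w ⬝ᵥ x‖ ^ 2 = c ^ 2 * ‖star (B.mulVec h) ⬝ᵥ (B.mulVec x)‖ ^ 2 := by
        rw [hwx x, norm_mul, mul_pow, Complex.norm_real, Real.norm_eq_abs, abs_of_pos hcpos]
      have h2 := cs_aux (B.mulVec h) (B.mulVec x)
      have h3 : (star (B.mulVec x) ⬝ᵥ (B.mulVec x)).re = (star x ⬝ᵥ Wt.mulVec x).re := by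
        rw [← key x x]
      calc ‖star w ⬝ᵥ x‖ ^ 2
          = c ^ 2 * ‖star (B.mulVec h) ⬝ᵥ (B.mulVec x)‖ ^ 2 := h1
        _ ≤ c ^ 2 * ((star (B.mulVec h) ⬝ᵥ (B.mulVec h)).re
              * (star (B.mulVec x) ⬝ᵥ (B.mulVec x)).re) := by
            apply mul_le_mul_of_nonneg_left h2 (sq_nonneg c)
        _ = (star x ⬝ᵥ Wt.mulVec x).re := by
            rw [hBh, h3, hc2]
            field_simp
  refine ⟨hP1, hP2, ?_, ?_⟩
  · rw [hR₀, add_sub_assoc]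
    exact hRt.add hP2
  · rw [hR₀, trace_sub, trace_add]
    ring
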